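/- Let q₀ ≥ ⋯ ≥ q_{n−1} be reals and m ≥ 1 with n ≥ 2m+1. Among all ways to append m real values to q₀,…,q_{n−1}, the m-trimmed mean (average after removing the m largest and m smallest of the n+m values) is at least (1/(n−m))·Σ_{h=m}^{n−1} q_h, with equality when all m appended values are below q_{n−1}. -/

import Mathlib

open Finset

/-- Median of a multiset of reals: average of the two middle order statistics
(equal to the middle one for odd cardinality). -/
noncomputable def med (s : Multiset ℝ) : ℝ :=
  ((s.sort (· ≤ ·)).getD ((Multiset.card s - 1) / 2) 0 +
    (s.sort (· ≤ ·)).getD (Multiset.card s / 2) 0) / 2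

/-- `m`-trimmed mean: remove the `m` largest and `m` smallest values and average the rest. -/
noncomputable def trimmedMean (m : ℕ) (s : Multiset ℝ) : ℝ :=
  ((((s.sort (· ≤ ·)).drop m).take (Multiset.card s - 2 * m)).sum) /
    ((Multiset.card s : ℝ) - 2 * m)

/-- The multiset of the first `n` values of `q`. -/
noncomputable def qMs (n : ℕ) (q : ℕ → ℝ) : Multiset ℝ :=
  (Finset.range n).val.map q

lemma list_sum_eq_range (l : List ℝ) : l.sum = ∑ i ∈ Finset.range l.length, l.getD i 0 := by
  induction l with
  | nil => simp
  | cons a l ih =>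
    rw [List.sum_cons, List.length_cons, Finset.sum_range_succ']
    simp [ih, add_comm]

lemma sublist_getD (l₁ l₂ : List ℝ) (h : l₁.Sublist l₂) (hs : l₂.Pairwise (· ≤ ·)) :
    ∀ i, i < l₁.length → l₁.getD i 0 ≤ l₂.getD (i + (l₂.length - l₁.length)) 0 := by
  induction h with
  | slnil => intro i hi; simp at hi
  | @cons l₁' l₂' a h ih =>
    intro i hi
    have hlen := h.length_le
    have h1 : i + ((a :: l₂').length - l₁'.length) = (i + (l₂'.length - l₁'.length)) + 1 := by
      simp only [List.length_cons]
      omega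
    rw [h1, List.getD_cons_succ]
    exact ih hs.of_cons i hi
  | @cons_cons l₁' l₂' a h ih =>
    intro i hi
    have hlen := h.length_le
    have hd : (a :: l₂').length - (a :: l₁').length = l₂'.length - l₁'.length := by
      simp only [List.length_cons]; omega
    match i with
    | 0 =>
      rw [hd]
      simp only [Nat.zero_add, List.getD_cons_zero]
      rcases Nat.eq_zero_or_pos (l₂'.length - l₁'.length) with h0 | h0
      · simp [h0]
      · obtain ⟨e, he⟩ : ∃ e, l₂'.length - l₁'.length = e + 1 := ⟨l₂'.length - l₁'.length - 1, by omega⟩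
        rw [he, List.getD_cons_succ]
        have helt : e < l₂'.length := by omega
        rw [List.getD_eq_getElem _ _ helt]
        exact (List.pairwise_cons.mp hs).1 _ (List.getElem_mem helt)
    | Nat.succ j =>
      have hj : j < l₁'.length := by simpa using hi
      rw [hd, List.getD_cons_succ]
      have : j + 1 + (l₂'.length - l₁'.length) = (j + (l₂'.length - l₁'.length)) + 1 := by omega
      rw [this, List.getD_cons_succ]
      exact ih hs.of_cons j hj

theorem stmt8 (n m : ℕ) (hm : 1 ≤ m) (hn : 2 * m + 1 ≤ n) (q : ℕ → ℝ)
    (hq : ∀ i j, i ≤ j → j < n → q j ≤ q i) :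
    (∀ t : Multiset ℝ, Multiset.card t = m →
      (∑ h ∈ Finset.Ico m n, q h) / ((n : ℝ) - m) ≤ trimmedMean m (qMs n q + t)) ∧
    (∀ t : Multiset ℝ, Multiset.card t = m → (∀ x ∈ t, x < q (n - 1)) →
      trimmedMean m (qMs n q + t) = (∑ h ∈ Finset.Ico m n, q h) / ((n : ℝ) - m)) := by
  set L : List ℝ := (List.range n).map (fun i => q (n - 1 - i)) with hL
  have hLlen : L.length = n := by simp [hL]
  have hLget : ∀ i (h : i < n), L.getD i 0 = q (n - 1 - i) := by
    intro i h
    rw [List.getD_eq_getElem _ _ (by omega : i < L.length)]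
    simp [hL]
  have hLsorted : L.Pairwise (· ≤ ·) := by
    rw [hL, List.pairwise_map]
    refine (List.pairwise_lt_range (n := n)).imp ?_
    intro i j hij
    exact hq (n - 1 - j) (n - 1 - i) (by omega) (by omega)
  have hsortq : (qMs n q).sort (· ≤ ·) = L := by
    refine List.Perm.eq_of_pairwise' (Multiset.pairwise_sort _ _) hLsorted ?_
    rw [← Multiset.coe_eq_coe, Multiset.sort_eq, qMs, hL]
    have h1 : (Finset.range n).val = (List.range n : Multiset ℕ) := rfl
    rw [h1]
    rw [Multiset.map_coe, Multiset.coe_eq_coe]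
    have h2 : (List.map q (List.range n)).reverse
        = List.map (fun i => q (n - 1 - i)) (List.range n) := by
      rw [← List.map_reverse, List.range_eq_range', List.reverse_range', List.map_map]
      simp [Function.comp, ← List.range_eq_range']
    rw [← h2]
    exact (List.reverse_perm _).symm
  have hLsum : ∑ i ∈ Finset.range (n - m), L.getD i 0 = ∑ h ∈ Finset.Ico m n, q h := by
    rw [Finset.sum_congr rfl (fun i hi => hLget i (by simp at hi; omega))]
    refine Finset.sum_nbij' (i := fun i => n - 1 - i) (j := fun h => n - 1 - h) ?_ ?_ ?_ ?_ ?_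
    · intro a ha; simp at ha ⊢; omega
    · intro a ha; simp at ha ⊢; omega
    · intro a ha; simp at ha ⊢; omega
    · intro a ha; simp at ha ⊢; omega
    · intro a ha; rfl
  have hden : ∀ t : Multiset ℝ, Multiset.card t = m →
      Multiset.card (qMs n q + t) = n + m := by
    intro t ht
    simp [qMs, ht]
  constructor
  · intro t ht
    set s := qMs n q + t with hs
    have hcards := hden t ht
    have hslen : (s.sort (· ≤ ·)).length = n + m := by
      rw [Multiset.length_sort, hcards]
    have hsub : L.Sublist (s.sort (· ≤ ·)) := by
      refine List.sublist_of_subperm_of_pairwise ?_ hLsorted (Multiset.pairwise_sort _ _)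
      refine Multiset.coe_le.mp ?_
      rw [← hsortq, Multiset.sort_eq, Multiset.sort_eq, hs]
      exact Multiset.le_add_right _ _
    rw [trimmedMean, hcards]
    have hdenr : ((n + m : ℕ) : ℝ) - 2 * m = (n : ℝ) - m := by push_cast; ring
    have h2 : n + m - 2 * m = n - m := by omega
    rw [hdenr, h2]
    have hpos : (0 : ℝ) < (n : ℝ) - m := by
      have : (m : ℝ) < n := by exact_mod_cast (by omega : m < n)
      linarith
    rw [div_le_div_iff_of_pos_right hpos]
    have hTlen : (((s.sort (· ≤ ·)).drop m).take (n - m)).length = n - m := by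
      rw [List.length_take, List.length_drop, hslen]; omega
    rw [← hLsum, list_sum_eq_range, hTlen]
    refine Finset.sum_le_sum ?_
    intro i hi
    simp only [Finset.mem_range] at hi
    have hgetT : (((s.sort (· ≤ ·)).drop m).take (n - m)).getD i 0
        = (s.sort (· ≤ ·)).getD (m + i) 0 := by
      rw [List.getD_eq_getElem _ _ (by omega : i < (((s.sort (· ≤ ·)).drop m).take (n - m)).length),
        List.getD_eq_getElem _ _ (by omega : m + i < (s.sort (· ≤ ·)).length)]
      simp only [List.getElem_take]
      exact (List.getElem_drop' _).symm
    rw [hgetT]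
    have := sublist_getD L (s.sort (· ≤ ·)) hsub (Multiset.pairwise_sort _ _) i (by omega)
    rwa [hslen, hLlen, (by omega : i + (n + m - n) = m + i)] at this
  · intro t ht hlt
    set s := qMs n q + t with hs
    have hcards := hden t ht
    set Tt : List ℝ := t.sort (· ≤ ·) with hTt
    have hTtlen : Tt.length = m := by rw [hTt, Multiset.length_sort, ht]
    have happ : s.sort (· ≤ ·) = Tt ++ L := by
      refine (fun hp hs' => List.Perm.eq_of_pairwise' (Multiset.pairwise_sort _ _) hs' hp) ?_ ?_
      · rw [← Multiset.coe_eq_coe, Multiset.sort_eq, ← Multiset.coe_add, ← hsortq,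
          Multiset.sort_eq, Multiset.sort_eq, hs, add_comm]
      · rw [List.pairwise_append]
        refine ⟨Multiset.pairwise_sort _ _, hLsorted, ?_⟩
        intro x hx y hy
        rw [hTt, Multiset.mem_sort] at hx
        rw [hL, List.mem_map] at hy
        obtain ⟨i, hi, rfl⟩ := hy
        have h1 : q (n - 1) ≤ q (n - 1 - i) := hq (n - 1 - i) (n - 1) (by omega) (by omega)
        exact le_of_lt (lt_of_lt_of_le (hlt x hx) h1)
    rw [trimmedMean, hcards, happ]
    have hdenr : ((n + m : ℕ) : ℝ) - 2 * m = (n : ℝ) - m := by push_cast; ring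
    have h2 : n + m - 2 * m = n - m := by omega
    rw [hdenr, h2, ← hTtlen, List.drop_left, hTtlen]
    congr 1
    rw [← hLsum, list_sum_eq_range]
    have htklen : (L.take (n - m)).length = n - m := by
      rw [List.length_take, hLlen]; omega
    rw [htklen]
    refine Finset.sum_congr rfl ?_
    intro i hi
    simp only [Finset.mem_range] at hi
    rw [List.getD_eq_getElem _ _ (by omega : i < (L.take (n - m)).length),
      List.getD_eq_getElem _ _ (by omega : i < L.length)]
    simp [List.getElem_take]
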